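/- For any 1 ≤ p < ∞, τ > 0, δ > 0, positive integer n, and t ∈ [0, 1/2]^n, N_p(ℤ^n, μ_p(τ; t)^{1/p}, t) ≥ exp(τ·μ_p(τ + 2δ; t))·H_p(τ, δ; t). -/

import Mathlib

open Real BigOperators

/-- The ℓ_p "norm" (for a real exponent `p`) of a vector in `ℝ^n`. -/
noncomputable def lpNorm (p : ℝ) {n : ℕ} (x : Fin n → ℝ) : ℝ :=
  (∑ i, |x i| ^ p) ^ (1 / p)

/-- `N_p(ℤ^n, r, t)`: the number of integer points `z ∈ ℤ^n` with `‖z - t‖_p ≤ r`. -/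
noncomputable def Npt (p : ℝ) (n : ℕ) (r : ℝ) (t : Fin n → ℝ) : ℕ :=
  Nat.card {z : Fin n → ℤ | lpNorm p (fun i => (z i : ℝ) - t i) ≤ r}

/-- `Θ_p(τ; s) = ∑_{z ∈ ℤ} exp(-τ |z - s|^p)`. -/
noncomputable def Theta1 (p τ s : ℝ) : ℝ :=
  ∑' z : ℤ, Real.exp (-τ * |(z : ℝ) - s| ^ p)

/-- `Θ_p(τ; t) = ∏_i Θ_p(τ; t_i)` for a vector `t ∈ ℝ^n`. -/
noncomputable def ThetaVec (p : ℝ) {n : ℕ} (τ : ℝ) (t : Fin n → ℝ) : ℝ :=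
  ∏ i, Theta1 p τ (t i)

/-- `μ_p(τ; s) = E_{X ∼ D_p(τ;s)}[|X|^p]`. -/
noncomputable def mu1 (p τ s : ℝ) : ℝ :=
  (∑' z : ℤ, |(z : ℝ) - s| ^ p * Real.exp (-τ * |(z : ℝ) - s| ^ p)) / Theta1 p τ s

/-- `μ_p(τ; t) = ∑_i μ_p(τ; t_i)` for a vector `t ∈ ℝ^n`. -/
noncomputable def muVec (p : ℝ) {n : ℕ} (τ : ℝ) (t : Fin n → ℝ) : ℝ :=
  ∑ i, mu1 p τ (t i)

/-- `H_p(τ, δ; t) := Θ_p(τ+δ; t) − exp(−δ μ_p(τ; t)) Θ_p(τ; t)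
− exp(δ μ_p(τ+2δ; t)) Θ_p(τ+2δ; t)`. -/
noncomputable def Hfun (p : ℝ) {n : ℕ} (τ δ : ℝ) (t : Fin n → ℝ) : ℝ :=
  ThetaVec p (τ + δ) t - Real.exp (-δ * muVec p τ t) * ThetaVec p τ t -
    Real.exp (δ * muVec p (τ + 2 * δ) t) * ThetaVec p (τ + 2 * δ) t

lemma summable_aux (p c s : ℝ) (hp : 1 ≤ p) (hc : 0 < c) :
    Summable (fun z : ℤ => Real.exp (-c * |(z : ℝ) - s| ^ p)) := by
  have hp0 : (0:ℝ) < p := lt_of_lt_of_le one_pos hp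
  have hsum : Summable (fun z : ℤ => Real.exp (c * (|s| + 1)) * Real.exp (-c) ^ z.natAbs) := by
    apply Summable.mul_left
    apply Summable.of_nat_of_neg <;>
      simpa using summable_geometric_of_lt_one (Real.exp_pos (-c)).le
        (Real.exp_lt_one_iff.2 (by linarith))
  apply Summable.of_nonneg_of_le (fun z => (Real.exp_pos _).le) _ hsum
  intro z
  have h1 : |(z:ℝ) - s| - 1 ≤ |(z:ℝ) - s| ^ p := by
    rcases le_total (|(z:ℝ) - s|) 1 with h | h
    · have := Real.rpow_nonneg (abs_nonneg ((z:ℝ) - s)) p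
      linarith
    · calc |(z:ℝ) - s| - 1 ≤ |(z:ℝ) - s| := by linarith
        _ = |(z:ℝ) - s| ^ (1:ℝ) := (Real.rpow_one _).symm
        _ ≤ |(z:ℝ) - s| ^ p := Real.rpow_le_rpow_of_exponent_le h hp
  have h2 : |(z:ℝ)| - |s| ≤ |(z:ℝ) - s| := abs_sub_abs_le_abs_sub _ _
  have habs : |(z:ℝ)| = (z.natAbs : ℝ) := by
    push_cast [Nat.cast_natAbs]; rfl
  have h3 : -c * |(z:ℝ) - s| ^ p ≤ c * (|s| + 1) + (z.natAbs : ℝ) * (-c) := by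
    rw [← habs]; nlinarith
  calc Real.exp (-c * |(z:ℝ) - s| ^ p) ≤ Real.exp (c * (|s| + 1) + (z.natAbs : ℝ) * (-c)) :=
        Real.exp_le_exp.2 h3
    _ = Real.exp (c * (|s| + 1)) * Real.exp (-c) ^ z.natAbs := by
        rw [Real.exp_add, Real.exp_nat_mul]

lemma theta1_pos (p c s : ℝ) (hp : 1 ≤ p) (hc : 0 < c) : 0 < Theta1 p c s :=
  Summable.tsum_pos (summable_aux p c s hp hc) (fun z => (Real.exp_pos _).le) 0 (Real.exp_pos _)

lemma mu1_nonneg (p c s : ℝ) (hp : 1 ≤ p) (hc : 0 < c) : 0 ≤ mu1 p c s :=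
  div_nonneg (tsum_nonneg fun z => mul_nonneg (Real.rpow_nonneg (abs_nonneg _) _)
    (Real.exp_pos _).le) (theta1_pos p c s hp hc).le

lemma muVec_nonneg (p c : ℝ) (hp : 1 ≤ p) (hc : 0 < c) {n : ℕ} (t : Fin n → ℝ) :
    0 ≤ muVec p c t :=
  Finset.sum_nonneg fun i _ => mu1_nonneg p c (t i) hp hc

set_option maxHeartbeats 1000000 in
lemma pi_tsum {n : ℕ} (g : Fin n → ℤ → ℝ) (h0 : ∀ i z, 0 ≤ g i z) (hs : ∀ i, Summable (g i)) :
    Summable (fun z : Fin n → ℤ => ∏ i, g i (z i)) ∧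
      (∑' z : Fin n → ℤ, ∏ i, g i (z i)) = ∏ i, ∑' w : ℤ, g i w := by
  induction n with
  | zero =>
    constructor
    · exact Summable.of_finite
    · simp
  | succ n ih =>
    obtain ⟨ihs, ihe⟩ := ih (fun i => g i.succ) (fun i z => h0 i.succ z) (fun i => hs i.succ)
    set e := (Fin.consEquiv (fun _ : Fin (n+1) => ℤ)).symm
    have key : ∀ q : ℤ × (Fin n → ℤ), (∏ i, g i (e.symm q i)) = g 0 q.1 * ∏ i, g i.succ (q.2 i) := by
      rintro ⟨a, w⟩
      rw [Fin.prod_univ_succ]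
      simp [e, Fin.consEquiv]
    have h2 : Summable (fun q : ℤ × (Fin n → ℤ) => g 0 q.1 * ∏ i, g i.succ (q.2 i)) := by
      apply Summable.mul_of_nonneg (hs 0) ihs (h0 0)
        (fun w => Finset.prod_nonneg fun i _ => h0 i.succ (w i))
    have hsum : Summable (fun z : Fin (n+1) → ℤ => ∏ i, g i (z i)) := by
      rw [← e.symm.summable_iff]
      exact h2.congr (fun q => (key q).symm)
    refine ⟨hsum, ?_⟩
    calc (∑' z : Fin (n+1) → ℤ, ∏ i, g i (z i))
        = ∑' q : ℤ × (Fin n → ℤ), ∏ i, g i (e.symm q i) := (e.symm.tsum_eq _).symm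
      _ = ∑' q : ℤ × (Fin n → ℤ), g 0 q.1 * ∏ i, g i.succ (q.2 i) := tsum_congr key
      _ = (∑' a : ℤ, g 0 a) * ∑' w : Fin n → ℤ, ∏ i, g i.succ (w i) :=
          ((hs 0).hasSum.mul ihs.hasSum h2).tsum_eq
      _ = ∏ i, ∑' w : ℤ, g i w := by rw [ihe, Fin.prod_univ_succ]

lemma thetaVec_repr (p c : ℝ) (hp : 1 ≤ p) (hc : 0 < c) {n : ℕ} (t : Fin n → ℝ) :
    Summable (fun z : Fin n → ℤ => Real.exp (-c * ∑ i, |(z i : ℝ) - t i| ^ p)) ∧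
      ThetaVec p c t = ∑' z : Fin n → ℤ, Real.exp (-c * ∑ i, |(z i : ℝ) - t i| ^ p) := by
  have h := pi_tsum (fun i z => Real.exp (-c * |(z : ℝ) - t i| ^ p))
    (fun i z => (Real.exp_pos _).le) (fun i => summable_aux p c (t i) hp hc)
  have key : ∀ z : Fin n → ℤ, (∏ i, Real.exp (-c * |(z i : ℝ) - t i| ^ p))
      = Real.exp (-c * ∑ i, |(z i : ℝ) - t i| ^ p) := by
    intro z
    rw [← Real.exp_sum, Finset.mul_sum]
  constructor
  · exact h.1.congr key
  · calc ThetaVec p c t = ∏ i, ∑' w : ℤ, Real.exp (-c * |(w : ℝ) - t i| ^ p) := rfl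
      _ = ∑' z : Fin n → ℤ, ∏ i, Real.exp (-c * |(z i : ℝ) - t i| ^ p) := h.2.symm
      _ = ∑' z : Fin n → ℤ, Real.exp (-c * ∑ i, |(z i : ℝ) - t i| ^ p) := tsum_congr key

lemma npt_set_finite (p r : ℝ) (hp : 1 ≤ p) {n : ℕ} (t : Fin n → ℝ) :
    {z : Fin n → ℤ | lpNorm p (fun i => (z i : ℝ) - t i) ≤ r}.Finite := by
  have hp0 : (0:ℝ) < p := lt_of_lt_of_le one_pos hp
  apply Set.Finite.subset (Set.Finite.pi (fun i => Set.finite_Icc (⌈t i - r⌉) (⌊t i + r⌋)))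
  intro z hz
  simp only [Set.mem_setOf_eq, lpNorm] at hz
  have hS0 : 0 ≤ ∑ i, |(z i : ℝ) - t i| ^ p :=
    Finset.sum_nonneg fun i _ => Real.rpow_nonneg (abs_nonneg _) _
  have hr0 : 0 ≤ r := le_trans (Real.rpow_nonneg hS0 _) hz
  have hSr : (∑ i, |(z i : ℝ) - t i| ^ p) ≤ r ^ p := by
    have h1 : ((∑ i, |(z i : ℝ) - t i| ^ p) ^ (1/p)) ^ p ≤ r ^ p :=
      Real.rpow_le_rpow (Real.rpow_nonneg hS0 _) hz hp0.le
    rwa [← Real.rpow_mul hS0, one_div_mul_cancel (ne_of_gt hp0), Real.rpow_one] at h1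
  simp only [Set.mem_pi, Set.mem_univ, Set.mem_Icc, forall_true_left]
  intro i
  have h2 : |(z i : ℝ) - t i| ^ p ≤ r ^ p :=
    le_trans (Finset.single_le_sum (f := fun i => |(z i : ℝ) - t i| ^ p)
      (fun i _ => Real.rpow_nonneg (abs_nonneg _) _) (Finset.mem_univ i)) hSr
  have h3 : |(z i : ℝ) - t i| ≤ r :=
    (Real.rpow_le_rpow_iff (abs_nonneg _) hr0 hp0).1 h2
  rw [abs_le] at h3
  constructor
  · exact Int.ceil_le.2 (by linarith)
  · exact Int.le_floor.2 (by linarith)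

/-- For any `1 ≤ p < ∞`, `τ > 0`, `δ > 0`, positive integer `n` and `t ∈ [0,1/2]^n`,
`N_p(ℤ^n, μ_p(τ;t)^{1/p}, t) ≥ exp(τ μ_p(τ+2δ; t)) H_p(τ, δ; t)`. -/
theorem H_gives_lower_bound (p τ δ : ℝ) (hp : 1 ≤ p) (hτ : 0 < τ) (hδ : 0 < δ)
    (n : ℕ) (hn : 0 < n) (t : Fin n → ℝ) (ht : ∀ i, t i ∈ Set.Icc (0 : ℝ) (1 / 2)) :
    Real.exp (τ * muVec p (τ + 2 * δ) t) * Hfun p τ δ t ≤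
      (Npt p n ((muVec p τ t) ^ (1 / p)) t : ℝ) := by
  have hp0 : (0:ℝ) < p := lt_of_lt_of_le one_pos hp
  set μ := muVec p τ t with hμdef
  set μ' := muVec p (τ + 2 * δ) t with hμ'def
  have hμ0 : 0 ≤ μ := muVec_nonneg p τ hp hτ t
  have hμ'0 : 0 ≤ μ' := muVec_nonneg p (τ + 2*δ) hp (by linarith) t
  set X : (Fin n → ℤ) → ℝ := fun z => ∑ i, |(z i : ℝ) - t i| ^ p with hXdef
  have hX0 : ∀ z, 0 ≤ X z :=
    fun z => Finset.sum_nonneg fun i _ => Real.rpow_nonneg (abs_nonneg _) _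
  obtain ⟨S1s, S1e⟩ := thetaVec_repr p (τ + δ) hp (by linarith) t
  obtain ⟨S0s, S0e⟩ := thetaVec_repr p τ hp hτ t
  obtain ⟨S2s, S2e⟩ := thetaVec_repr p (τ + 2 * δ) hp (by linarith) t
  set NS := {z : Fin n → ℤ | lpNorm p (fun i => (z i : ℝ) - t i) ≤ μ ^ (1/p)} with hNSdef
  have hfin : NS.Finite := npt_set_finite p _ hp t
  set A : (Fin n → ℤ) → ℝ := fun z => Real.exp (-δ * μ) * Real.exp (-τ * X z) with hAdef
  set B : (Fin n → ℤ) → ℝ :=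
    fun z => Real.exp (δ * μ') * Real.exp (-(τ + 2 * δ) * X z) with hBdef
  set C : (Fin n → ℤ) → ℝ := NS.indicator (fun _ => Real.exp (-τ * μ')) with hCdef
  have hA : Summable A := S0s.mul_left _
  have hB : Summable B := S2s.mul_left _
  have hC : Summable C := by
    apply summable_of_ne_finset_zero (s := hfin.toFinset)
    intro b hb
    exact Set.indicator_of_notMem (by simpa using hb) _
  have hCnn : ∀ z, 0 ≤ C z := fun z => Set.indicator_nonneg (fun _ _ => (Real.exp_pos _).le) z
  have pointwise : ∀ z, Real.exp (-(τ + δ) * X z) ≤ A z + B z + C z := by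
    intro z
    have hAnn : 0 ≤ A z := mul_nonneg (Real.exp_pos _).le (Real.exp_pos _).le
    have hBnn : 0 ≤ B z := mul_nonneg (Real.exp_pos _).le (Real.exp_pos _).le
    have hXz := hX0 z
    by_cases h1 : μ ≤ X z
    · have : Real.exp (-(τ + δ) * X z) ≤ A z := by
        simp only [hAdef]
        rw [← Real.exp_add]
        exact Real.exp_le_exp.2 (by nlinarith)
      linarith [hCnn z]
    · push_neg at h1
      by_cases h2 : X z ≤ μ'
      · have : Real.exp (-(τ + δ) * X z) ≤ B z := by
          simp only [hBdef]
          rw [← Real.exp_add]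
          exact Real.exp_le_exp.2 (by nlinarith)
        linarith [hCnn z]
      · push_neg at h2
        have hzNS : z ∈ NS := by
          simp only [hNSdef, Set.mem_setOf_eq, lpNorm]
          exact Real.rpow_le_rpow (hX0 z) h1.le (by positivity)
        have hCz : C z = Real.exp (-τ * μ') := Set.indicator_of_mem hzNS _
        have : Real.exp (-(τ + δ) * X z) ≤ C z := by
          rw [hCz]
          exact Real.exp_le_exp.2 (by nlinarith)
        linarith
  have hCsum : ∑' z, C z = (Npt p n (μ ^ (1/p)) t : ℝ) * Real.exp (-τ * μ') := by
    rw [tsum_eq_sum (s := hfin.toFinset)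
      (fun b hb => Set.indicator_of_notMem (by simpa using hb) _)]
    rw [Finset.sum_congr rfl (fun b hb => Set.indicator_of_mem (by simpa using hb) _)]
    rw [Finset.sum_const, nsmul_eq_mul]
    have hcard : hfin.toFinset.card = Npt p n (μ ^ (1/p)) t := by
      rw [Npt, Nat.card_coe_set_eq, Set.ncard_eq_toFinset_card _ hfin]
    rw [hcard]
  have big : ThetaVec p (τ + δ) t ≤ Real.exp (-δ * μ) * ThetaVec p τ t
      + Real.exp (δ * μ') * ThetaVec p (τ + 2 * δ) t
      + (Npt p n (μ ^ (1/p)) t : ℝ) * Real.exp (-τ * μ') := by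
    rw [S1e, S0e, S2e, ← hCsum]
    calc (∑' z, Real.exp (-(τ + δ) * X z))
        ≤ ∑' z, (A z + B z + C z) := Summable.tsum_le_tsum pointwise S1s ((hA.add hB).add hC)
      _ = (∑' z, A z) + (∑' z, B z) + ∑' z, C z := by
          rw [Summable.tsum_add (hA.add hB) hC, Summable.tsum_add hA hB]
      _ = Real.exp (-δ * μ) * (∑' z, Real.exp (-τ * X z))
            + Real.exp (δ * μ') * (∑' z, Real.exp (-(τ + 2 * δ) * X z)) + ∑' z, C z := by
          rw [hAdef, hBdef, tsum_mul_left, tsum_mul_left]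
  have hH : Hfun p τ δ t ≤ (Npt p n (μ ^ (1/p)) t : ℝ) * Real.exp (-τ * μ') := by
    rw [Hfun]
    rw [← hμdef, ← hμ'def]
    linarith
  calc Real.exp (τ * μ') * Hfun p τ δ t
      ≤ Real.exp (τ * μ') * ((Npt p n (μ ^ (1/p)) t : ℝ) * Real.exp (-τ * μ')) :=
        mul_le_mul_of_nonneg_left hH (Real.exp_pos _).le
    _ = (Npt p n (μ ^ (1/p)) t : ℝ) * (Real.exp (τ * μ') * Real.exp (-τ * μ')) := by ring
    _ = (Npt p n (μ ^ (1/p)) t : ℝ) := by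
        rw [← Real.exp_add]
        have h9 : τ * μ' + -τ * μ' = 0 := by ring
        rw [h9, Real.exp_zero, mul_one]
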